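/- arXiv:1703.00742 — 2 statements merged into one kernel-verified Lean document; each statement's English description precedes it below -/
import Mathlib

section
/- Let k ≥ 1 be an integer, ε ∈ {−1, +1}, and x > 0 a real number. Then |I_ε(0, 0, k; x)| ≤ √π · (4x)^{−k+1/2} / Γ(k + 1/2). -/
open MeasureTheory

/-- `e(x) := exp(2πi x)`. -/
noncomputable def e2 (x : ℂ) : ℂ := Complex.exp (2 * Real.pi * Complex.I * x)

/-- The confluent hypergeometric function `₁F₁(a, b; x)` defined by its series. -/
noncomputable def hyp1F1 (a b x : ℂ) : ℂ :=
  (Complex.Gamma b / Complex.Gamma a) *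
    ∑' j : ℕ, (Complex.Gamma (a + j) / Complex.Gamma (b + j)) * x ^ j / (Nat.factorial j)

-- Auxiliary lemmas
lemma pointwise_tsum (m : ℕ) (z : ℂ) (t : ℝ) :
    ∑' j : ℕ, (z ^ j / (Nat.factorial j) : ℂ) * (t:ℂ) ^ (m + j) * (1 - (t:ℂ)) ^ m
      = Complex.exp (z * t) * (t:ℂ) ^ m * (1 - (t:ℂ)) ^ m := by
  have h : Complex.exp (z * t) = ∑' j : ℕ, (z * t) ^ j / (Nat.factorial j) := by
    rw [Complex.exp_eq_exp_ℂ, NormedSpace.exp_eq_tsum_div]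
  rw [h, ← tsum_mul_right, ← tsum_mul_right]
  congr 1; ext j
  rw [pow_add, mul_pow]
  ring

lemma beta_nat_pow (p q : ℕ) :
    ∫ t in Set.Ioc (0:ℝ) 1, (t:ℂ) ^ p * (1 - (t:ℂ)) ^ q
      = ((p.factorial * q.factorial / (p+q+1).factorial : ℝ) : ℂ) := by
  have h1 : Complex.betaIntegral (p+1) (q+1) = ∫ t in Set.Ioc (0:ℝ) 1, (t:ℂ) ^ p * (1 - (t:ℂ)) ^ q := by
    rw [Complex.betaIntegral, intervalIntegral.integral_of_le zero_le_one]
    congr 1; ext t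
    rw [show ((p:ℂ)+1-1) = (p:ℂ) by ring, show ((q:ℂ)+1-1) = (q:ℂ) by ring,
      Complex.cpow_natCast, Complex.cpow_natCast]
  have h2 := Complex.Gamma_mul_Gamma_eq_betaIntegral
    (s := (p+1:ℂ)) (t := (q+1:ℂ)) (by simp; positivity) (by simp; positivity)
  rw [Complex.Gamma_nat_eq_factorial, Complex.Gamma_nat_eq_factorial,
    show ((p:ℂ)+1+((q:ℂ)+1)) = ((p+q+1:ℕ):ℂ) + 1 by push_cast; ring,
    Complex.Gamma_nat_eq_factorial] at h2
  rw [← h1]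
  have hne : (((p+q+1).factorial : ℂ)) ≠ 0 :=
    Nat.cast_ne_zero.mpr (Nat.factorial_ne_zero _)
  field_simp at h2 ⊢
  push_cast
  rw [eq_div_iff hne]
  linear_combination -h2

lemma swap_lemma (m : ℕ) (z : ℂ) :
    (∫ t in Set.Ioc (0:ℝ) 1, Complex.exp (z*t) * (t:ℂ)^m * (1-(t:ℂ))^m)
      = ∑' j : ℕ, (z ^ j / (Nat.factorial j : ℂ)) *
          (((m+j).factorial * m.factorial / ((2*m+1+j).factorial) : ℝ) : ℂ) := by
  set μ := volume.restrict (Set.Ioc (0:ℝ) 1) with hμ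
  set f : ℕ → ℝ → ℂ := fun j t => (z ^ j / (Nat.factorial j) : ℂ) * (t:ℂ) ^ (m + j) * (1 - (t:ℂ)) ^ m with hf
  have hmeas : ∀ j, AEStronglyMeasurable (f j) μ := by
    intro j
    apply Continuous.aestronglyMeasurable
    fun_prop
  have hnorm : ∀ j, ∀ t ∈ Set.Ioc (0:ℝ) 1, ‖f j t‖ ≤ ‖z‖ ^ j / (Nat.factorial j) := by
    intro j t ht
    obtain ⟨ht0, ht1⟩ := ht
    have hb : ‖f j t‖ = ‖z‖^j / (Nat.factorial j) * (t ^ (m+j) * (1-t)^m) := by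
      simp only [hf, norm_mul, norm_div, norm_pow, Complex.norm_real, Real.norm_eq_abs,
        Complex.norm_natCast]
      rw [show ‖1 - (t:ℂ)‖ = 1 - t from by
          rw [show (1 - (t:ℂ)) = ((1 - t : ℝ) : ℂ) from by push_cast; ring, Complex.norm_real, Real.norm_eq_abs,
            _root_.abs_of_nonneg (by linarith : (0:ℝ) ≤ 1 - t)],
        _root_.abs_of_pos ht0]
      ring
    rw [hb]
    have h1 : t ^ (m+j) * (1-t)^m ≤ 1 := by
      apply mul_le_one₀ (pow_le_one₀ ht0.le ht1) (pow_nonneg (by linarith) m)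
        (pow_le_one₀ (by linarith) (by linarith))
    nlinarith [pow_nonneg ht0.le (m+j), pow_nonneg (show (0:ℝ) ≤ 1 - t by linarith) m,
      div_nonneg (pow_nonneg (norm_nonneg z) j) (Nat.cast_nonneg (Nat.factorial j) : (0:ℝ) ≤ _)]
  have hbound : ∑' j, ∫⁻ t, ‖f j t‖₊ ∂μ ≠ ⊤ := by
    have hle : ∀ j, ∫⁻ t, ‖f j t‖₊ ∂μ ≤ ENNReal.ofReal (‖z‖^j / (Nat.factorial j)) := by
      intro j
      have : ∫⁻ t, ‖f j t‖₊ ∂μ ≤ ∫⁻ _, ENNReal.ofReal (‖z‖^j / (Nat.factorial j)) ∂μ := by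
        apply lintegral_mono_ae
        filter_upwards [ae_restrict_mem measurableSet_Ioc] with t ht
        rw [← enorm_eq_nnnorm, ← ofReal_norm]
        exact ENNReal.ofReal_le_ofReal (hnorm j t ht)
      refine this.trans ?_
      rw [lintegral_const, hμ, Measure.restrict_apply_univ, Real.volume_Ioc]
      simp
    refine ne_top_of_le_ne_top ?_ (ENNReal.tsum_le_tsum hle)
    rw [← ENNReal.ofReal_tsum_of_nonneg (fun j => by positivity)
      (Real.summable_pow_div_factorial ‖z‖)]
    exact ENNReal.ofReal_ne_top
  have hpt : ∀ t : ℝ, ∑' j, f j t = Complex.exp (z*t) * (t:ℂ)^m * (1-(t:ℂ))^m :=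
    fun t => pointwise_tsum m z t
  rw [show (∫ t in Set.Ioc (0:ℝ) 1, Complex.exp (z*t) * (t:ℂ)^m * (1-(t:ℂ))^m)
      = ∫ t, (∑' j, f j t) ∂μ from (integral_congr_ae (Filter.Eventually.of_forall hpt)).symm]
  rw [MeasureTheory.integral_tsum hmeas hbound]
  congr 1; ext j
  have : ∀ t : ℝ, f j t = (z ^ j / (Nat.factorial j) : ℂ) * ((t:ℂ) ^ (m + j) * (1 - (t:ℂ)) ^ m) := by
    intro t; rw [hf]; ring
  rw [show (∫ t, f j t ∂μ) = (z ^ j / (Nat.factorial j) : ℂ) *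
      ∫ t in Set.Ioc (0:ℝ) 1, ((t:ℂ) ^ (m + j) * (1 - (t:ℂ)) ^ m) by
    rw [← MeasureTheory.integral_const_mul]
    exact integral_congr_ae (Filter.Eventually.of_forall fun t => this t)]
  rw [beta_nat_pow (m+j) m, show m + j + m + 1 = 2*m+1+j from by omega]

lemma real_beta_eval (m : ℕ) :
    (∫ t in Set.Ioc (0:ℝ) 1, t^m * (1-t)^m)
      = (m.factorial * m.factorial / ((2*m+1).factorial) : ℝ) := by
  have h := beta_nat_pow m m
  rw [show m + m + 1 = 2*m+1 from by omega] at h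
  rw [← Complex.ofReal_inj, ← h]
  rw [show ((∫ t in Set.Ioc (0:ℝ) 1, t^m * (1-t)^m : ℝ) : ℂ)
      = ∫ t in Set.Ioc (0:ℝ) 1, ((t^m * (1-t)^m : ℝ) : ℂ) from integral_ofReal.symm]
  apply integral_congr_ae
  filter_upwards with t
  push_cast; ring

lemma norm_tsum_le (m : ℕ) (z : ℂ) (hz : z.re = 0) :
    ‖∑' j : ℕ, (((m+j).factorial : ℂ) / ((2*m+1+j).factorial)) * z ^ j / (Nat.factorial j)‖
      ≤ (m.factorial : ℝ) / ((2*m+1).factorial) := by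
  have hsum : (∑' j : ℕ, (((m+j).factorial : ℂ) / ((2*m+1+j).factorial)) * z ^ j / (Nat.factorial j))
      = (1 / (m.factorial : ℂ)) *
        ∫ t in Set.Ioc (0:ℝ) 1, Complex.exp (z*t) * (t:ℂ)^m * (1-(t:ℂ))^m := by
    rw [swap_lemma, ← tsum_mul_left]
    congr 1; ext j
    have hm : ((m.factorial : ℂ)) ≠ 0 := Nat.cast_ne_zero.mpr (Nat.factorial_ne_zero _)
    push_cast
    set A := ((m+j).factorial : ℂ) with hA
    set B := ((2*m+1+j).factorial : ℂ) with hB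
    set C := ((Nat.factorial j) : ℂ) with hC
    have hB0 : B ≠ 0 := Nat.cast_ne_zero.mpr (Nat.factorial_ne_zero _)
    have hC0 : C ≠ 0 := Nat.cast_ne_zero.mpr (Nat.factorial_ne_zero _)
    field_simp
  rw [hsum, norm_mul]
  have h1 : ‖1 / (m.factorial : ℂ)‖ = 1 / (m.factorial : ℝ) := by
    simp [Complex.norm_natCast]
  rw [h1]
  have h2 : ‖∫ t in Set.Ioc (0:ℝ) 1, Complex.exp (z*t) * (t:ℂ)^m * (1-(t:ℂ))^m‖
      ≤ (m.factorial * m.factorial / ((2*m+1).factorial) : ℝ) := by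
    rw [← real_beta_eval m]
    refine (norm_integral_le_integral_norm _).trans ?_
    apply le_of_eq
    apply setIntegral_congr_fun measurableSet_Ioc
    intro t ht
    obtain ⟨ht0, ht1⟩ := ht
    simp only [norm_mul, norm_pow, Complex.norm_real, Real.norm_eq_abs, Complex.norm_exp]
    rw [show (z * (t:ℂ)).re = 0 from by simp [Complex.mul_re, hz], Real.exp_zero,
      show ‖1 - (t:ℂ)‖ = 1 - t from by
        rw [show (1 - (t:ℂ)) = ((1 - t : ℝ) : ℂ) from by push_cast; ring, Complex.norm_real, Real.norm_eq_abs,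
          _root_.abs_of_nonneg (by linarith : (0:ℝ) ≤ 1 - t)],
      _root_.abs_of_pos ht0]
    ring
  calc 1 / (m.factorial : ℝ) * ‖_‖ ≤ 1 / (m.factorial : ℝ) *
        (m.factorial * m.factorial / ((2*m+1).factorial) : ℝ) := by
        apply mul_le_mul_of_nonneg_left h2 (by positivity)
    _ = (m.factorial : ℝ) / ((2*m+1).factorial) := by
        field_simp

lemma hyp_abs_le (m : ℕ) (z : ℂ) (hz : z.re = 0) :
    ‖hyp1F1 (((m+1:ℕ)):ℂ) (2*((m+1:ℕ):ℂ)) z‖ ≤ 1 := by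
  rw [hyp1F1]
  have hga : ∀ j : ℕ, Complex.Gamma (((m+1:ℕ):ℂ) + j) = ((m+j).factorial : ℂ) := by
    intro j
    rw [show (((m+1:ℕ):ℂ) + j) = ((m+j:ℕ):ℂ) + 1 by push_cast; ring,
      Complex.Gamma_nat_eq_factorial]
  have hgb : ∀ j : ℕ, Complex.Gamma (2*((m+1:ℕ):ℂ) + j) = ((2*m+1+j).factorial : ℂ) := by
    intro j
    rw [show (2*((m+1:ℕ):ℂ) + j) = ((2*m+1+j:ℕ):ℂ) + 1 by push_cast; ring,
      Complex.Gamma_nat_eq_factorial]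
  have hg1 : Complex.Gamma (((m+1:ℕ)):ℂ) = (m.factorial : ℂ) := by
    rw [show (((m+1:ℕ)):ℂ) = ((m:ℕ):ℂ) + 1 by push_cast; ring, Complex.Gamma_nat_eq_factorial]
  have hg2 : Complex.Gamma (2*((m+1:ℕ):ℂ)) = ((2*m+1).factorial : ℂ) := by
    rw [show (2*((m+1:ℕ):ℂ)) = ((2*m+1:ℕ):ℂ) + 1 by push_cast; ring,
      Complex.Gamma_nat_eq_factorial]
  rw [hg1, hg2, show (∑' j : ℕ, (Complex.Gamma (((m+1:ℕ):ℂ) + j) / Complex.Gamma (2*((m+1:ℕ):ℂ) + j)) * z ^ j / (Nat.factorial j))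
      = ∑' j : ℕ, (((m+j).factorial : ℂ) / ((2*m+1+j).factorial)) * z ^ j / (Nat.factorial j) from
    tsum_congr fun j => by rw [hga j, hgb j]]
  rw [norm_mul]
  have h1 : ‖((2*m+1).factorial : ℂ) / (m.factorial : ℂ)‖
      = ((2*m+1).factorial : ℝ) / (m.factorial : ℝ) := by
    rw [norm_div]; simp [Complex.norm_natCast]
  rw [h1]
  calc ((2*m+1).factorial : ℝ) / (m.factorial : ℝ) * ‖_‖
      ≤ ((2*m+1).factorial : ℝ) / (m.factorial : ℝ) * ((m.factorial : ℝ) / ((2*m+1).factorial)) := by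
        apply mul_le_mul_of_nonneg_left (norm_tsum_le m z hz) (by positivity)
    _ = 1 := by
        have h2 : ((2*m+1).factorial : ℝ) ≠ 0 := Nat.cast_ne_zero.mpr (Nat.factorial_ne_zero _)
        have h3 : ((m).factorial : ℝ) ≠ 0 := Nat.cast_ne_zero.mpr (Nat.factorial_ne_zero _)
        field_simp

/-- `I_ε(u, v, k; x)`. -/
noncomputable def Ieps (ε : ℤ) (u v : ℂ) (k : ℕ) (x : ℝ) : ℂ :=
  e2 ((ε : ℂ) / 8 - ε * k / 4) * (x : ℂ) ^ ((1 : ℂ) / 2 - k) *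
    (Complex.Gamma ((k : ℂ) - v - u) / Complex.Gamma (2 * k)) *
    hyp1F1 ((k : ℂ) - v - u) (2 * k) (-(e2 (-(ε : ℂ) / 4)) / x)

theorem stmt4 (k : ℕ) (hk : 1 ≤ k) (ε : ℤ) (hε : ε = -1 ∨ ε = 1) (x : ℝ) (hx : 0 < x) :
    ‖Ieps ε 0 0 k x‖ ≤
      Real.sqrt Real.pi * (4 * x) ^ (-(k : ℝ) + 1 / 2) / Real.Gamma ((k : ℝ) + 1 / 2) := by
  obtain ⟨m, rfl⟩ : ∃ m, k = m + 1 := ⟨k - 1, by omega⟩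
  rw [Ieps, sub_zero, sub_zero]
  -- the z argument has re = 0
  set z : ℂ := -(e2 (-(ε : ℂ) / 4)) / x with hzdef
  have hz : z.re = 0 := by
    have hw : (e2 (-(ε : ℂ) / 4)).re = 0 := by
      rcases hε with h | h <;> subst h
      · rw [e2, show (2 * (Real.pi:ℂ) * Complex.I * (-((-1 : ℤ):ℂ) / 4))
            = ((Real.pi / 2 : ℝ) : ℂ) * Complex.I by push_cast; ring,
          Complex.exp_ofReal_mul_I_re, Real.cos_pi_div_two]
      · rw [e2, show (2 * (Real.pi:ℂ) * Complex.I * (-((1 : ℤ):ℂ) / 4))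
            = ((-(Real.pi / 2) : ℝ) : ℂ) * Complex.I by push_cast; ring,
          Complex.exp_ofReal_mul_I_re, Real.cos_neg, Real.cos_pi_div_two]
    rw [hzdef, show (-(e2 (-(ε : ℂ) / 4)) / (x:ℂ)) = ((x⁻¹ : ℝ) : ℂ) * (-(e2 (-(ε : ℂ) / 4))) by
      push_cast; field_simp, Complex.re_ofReal_mul, Complex.neg_re, hw]
    simp
  -- |e2 real| = 1
  have h1 : ‖e2 ((ε : ℂ) / 8 - ε * ((m+1:ℕ):ℂ) / 4)‖ = 1 := by
    rw [e2, show (2 * (Real.pi:ℂ) * Complex.I * ((ε : ℂ) / 8 - ε * ((m+1:ℕ):ℂ) / 4))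
        = ((2 * Real.pi * ((ε : ℝ) / 8 - (ε:ℝ) * ((m+1:ℕ):ℝ) / 4) : ℝ) : ℂ) * Complex.I by
      push_cast; ring]
    exact Complex.norm_exp_ofReal_mul_I _
  -- |x ^ (1/2 - k)|
  have h2 : ‖(x : ℂ) ^ ((1 : ℂ) / 2 - ((m+1:ℕ):ℂ))‖
      = x ^ ((1:ℝ) / 2 - ((m+1:ℕ):ℝ)) := by
    rw [show ((1 : ℂ) / 2 - ((m+1:ℕ):ℂ)) = (((1:ℝ)/2 - ((m+1:ℕ):ℝ) : ℝ) : ℂ) by push_cast; ring,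
      Complex.norm_cpow_eq_rpow_re_of_pos hx, Complex.ofReal_re]
  -- Gamma ratio
  have hg1 : Complex.Gamma (((m+1:ℕ)):ℂ) = (m.factorial : ℂ) := by
    rw [show (((m+1:ℕ)):ℂ) = ((m:ℕ):ℂ) + 1 by push_cast; ring, Complex.Gamma_nat_eq_factorial]
  have hg2 : Complex.Gamma (2*((m+1:ℕ):ℂ)) = ((2*m+1).factorial : ℂ) := by
    rw [show (2*((m+1:ℕ):ℂ)) = ((2*m+1:ℕ):ℂ) + 1 by push_cast; ring,
      Complex.Gamma_nat_eq_factorial]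
  have h3 : ‖Complex.Gamma (((m+1:ℕ)):ℂ) / Complex.Gamma (2*((m+1:ℕ):ℂ))‖
      = (m.factorial : ℝ) / ((2*m+1).factorial : ℝ) := by
    rw [hg1, hg2, norm_div]; simp [Complex.norm_natCast]
  have h4 := hyp_abs_le m z hz
  -- RHS equals x^(1/2-k) * m!/(2m+1)!
  have hRHS : Real.sqrt Real.pi * (4 * x) ^ (-((m+1:ℕ) : ℝ) + 1 / 2) / Real.Gamma (((m+1:ℕ) : ℝ) + 1 / 2)
      = x ^ ((1:ℝ)/2 - ((m+1:ℕ):ℝ)) * ((m.factorial : ℝ) / ((2*m+1).factorial : ℝ)) := by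
    have hdup := Real.Gamma_mul_Gamma_add_half ((m+1:ℕ) : ℝ)
    rw [show (((m+1:ℕ)):ℝ) = ((m:ℕ):ℝ) + 1 by push_cast; ring] at hdup
    rw [Real.Gamma_nat_eq_factorial] at hdup
    rw [show (2*(((m:ℕ):ℝ) + 1)) = ((2*m+1:ℕ):ℝ) + 1 by push_cast; ring] at hdup
    rw [Real.Gamma_nat_eq_factorial] at hdup
    have hGpos : 0 < Real.Gamma (((m:ℕ):ℝ) + 1 + 1/2) := Real.Gamma_pos_of_pos (by positivity)
    have hsplit : (4 * x) ^ (-((m+1:ℕ) : ℝ) + 1 / 2)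
        = (4:ℝ) ^ (-((m+1:ℕ) : ℝ) + 1 / 2) * x ^ (-((m+1:ℕ) : ℝ) + 1 / 2) :=
      Real.mul_rpow (by norm_num) hx.le
    have h22 : (2:ℝ) ^ (2:ℝ) = 4 := by
      have := Real.rpow_natCast (2:ℝ) 2
      norm_num at this
      linarith [this]
    have h4pow : (4:ℝ) ^ (-((m+1:ℕ) : ℝ) + 1 / 2) = (2:ℝ) ^ (1 - (((2*m+1:ℕ):ℝ)+1)) := by
      rw [← h22, ← Real.rpow_mul (by norm_num : (0:ℝ) ≤ 2)]
      congr 1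
      push_cast; ring
    rw [hsplit, h4pow, show (1:ℝ)/2 - ((m+1:ℕ):ℝ) = -((m+1:ℕ) : ℝ) + 1 / 2 from by ring,
      show (((m+1:ℕ)):ℝ) + 1/2 = ((m:ℕ):ℝ) + 1 + 1/2 from by push_cast; ring]
    have hf1 : ((2*m+1).factorial : ℝ) ≠ 0 := Nat.cast_ne_zero.mpr (Nat.factorial_ne_zero _)
    have key : Real.sqrt Real.pi * (2:ℝ) ^ (1 - (((2*m+1:ℕ):ℝ)+1))
        = (m.factorial : ℝ) * Real.Gamma (((m:ℕ):ℝ) + 1 + 1/2) / ((2*m+1).factorial : ℝ) := by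
      rw [eq_div_iff hf1]
      linear_combination -hdup
    rw [show Real.sqrt Real.pi * ((2:ℝ) ^ (1 - (((2*m+1:ℕ):ℝ)+1)) * x ^ (-((m+1:ℕ) : ℝ) + 1 / 2))
          / Real.Gamma (((m:ℕ):ℝ) + 1 + 1/2)
        = (Real.sqrt Real.pi * (2:ℝ) ^ (1 - (((2*m+1:ℕ):ℝ)+1))) * x ^ (-((m+1:ℕ) : ℝ) + 1 / 2)
          / Real.Gamma (((m:ℕ):ℝ) + 1 + 1/2) from by ring, key]
    field_simp
  rw [norm_mul, norm_mul, norm_mul, h1, h2, h3, hRHS, one_mul, mul_assoc]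
  apply mul_le_mul_of_nonneg_left _ (Real.rpow_nonneg hx.le _)
  exact mul_le_of_le_one_right (by positivity) h4
end

section
/- For every ε > 0 there exists a constant A > 0 such that for all positive integers l and k: |W_1(l, k)| ≤ A · l^{1/2+ε} · k^{−1} · (e/20)^{2k}, where e is Euler's number. -/
/-- An inverse `n*` of `n` modulo `c`. -/
noncomputable def nstar (c n : ℕ) : ℕ := (((n : ZMod c)⁻¹ : ZMod c)).val

/-- The summand `T_{l,k}(c,n)`. -/
noncomputable def Tlk (l k c n : ℕ) : ℂ :=
  ((1 : ℝ) / Real.sqrt (c * n)) * ((1 : ℝ) / Real.sqrt (2 * Real.pi)) *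
    (e2 ((nstar c n * l : ℕ) / (c : ℂ) + 1 / 8) *
        Ieps (-1) 0 0 (2 * k) ((c : ℝ) * n / (2 * Real.pi * l))
      + e2 (-((nstar c n * l : ℕ) / (c : ℂ)) - 1 / 8) *
        Ieps 1 0 0 (2 * k) ((c : ℝ) * n / (2 * Real.pi * l)))

open Classical in
/-- `W_1(l, k)`: the part of the sum with `πl/(cn) < k/5`. -/
noncomputable def W1 (l k : ℕ) : ℂ :=
  ∑' p : ℕ × ℕ,
    if 0 < p.1 ∧ 0 < p.2 ∧ Nat.Coprime p.2 p.1 ∧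
        Real.pi * l / ((p.1 : ℝ) * p.2) < (k : ℝ) / 5
    then Tlk l k p.1 p.2 else 0

open Classical in
/-- `W_2(l, k)`: the part of the sum with `πl/(cn) ≥ k/5`. -/
noncomputable def W2 (l k : ℕ) : ℂ :=
  ∑' p : ℕ × ℕ,
    if 0 < p.1 ∧ 0 < p.2 ∧ Nat.Coprime p.2 p.1 ∧
        (k : ℝ) / 5 ≤ Real.pi * l / ((p.1 : ℝ) * p.2)
    then Tlk l k p.1 p.2 else 0


section AuxProofs

open Complex MeasureTheory Set Real Filter


lemma abs_e2_real (t : ℝ) : norm (e2 t) = 1 := by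
  rw [e2, Complex.norm_exp]
  have : (2 * (Real.pi:ℂ) * I * (t:ℂ)).re = 0 := by simp [Complex.mul_re]
  rw [this, Real.exp_zero]

lemma e2_quarter : e2 (1/4) = I := by
  rw [e2]
  have h : 2 * (Real.pi:ℂ) * I * (1/4) = (Real.pi/2 : ℝ) * I := by push_cast; ring
  rw [h, Complex.exp_mul_I]
  simp [Real.cos_pi_div_two, Real.sin_pi_div_two]

lemma e2_neg_quarter : e2 (-(1/4)) = -I := by
  rw [e2]
  have h : 2 * (Real.pi:ℂ) * I * (-(1/4)) = (-(Real.pi/2) : ℝ) * I := by push_cast; ring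
  rw [h, Complex.exp_mul_I]
  simp [Real.cos_pi_div_two, Real.sin_pi_div_two]

lemma hyp1F1_abs_le_one (a b : ℝ) (ha : 0 < a) (hab : a < b) (y : ℝ) :
    norm (hyp1F1 a b (Complex.I * y)) ≤ 1 := by
  set z : ℂ := Complex.I * y with hz
  have hb : 0 < b := ha.trans hab
  have hba : 0 < b - a := by linarith
  set μ : Measure ℝ := volume.restrict (Ioc (0:ℝ) 1) with hμ
  have hIoo : ∀ᵐ t ∂μ, t ∈ Ioo (0:ℝ) 1 := by
    have h1 : ∀ᵐ t ∂μ, t ∈ Ioc (0:ℝ) 1 := ae_restrict_mem measurableSet_Ioc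
    have h2 : ∀ᵐ t ∂μ, t ≠ (1:ℝ) := by
      refine ae_restrict_of_ae ?_
      rw [ae_iff]
      have : {t : ℝ | ¬ t ≠ 1} = {1} := by ext t; simp
      rw [this]
      exact measure_singleton 1
    filter_upwards [h1, h2] with t ht hne
    exact ⟨ht.1, lt_of_le_of_ne ht.2 hne⟩
  set F : ℕ → ℝ → ℂ := fun j t =>
    ((t : ℂ) ^ ((((a + j : ℝ)) : ℂ) - 1) * ((1 : ℂ) - (t : ℂ)) ^ (((b - a : ℝ) : ℂ) - 1)) *
      (z ^ j / (Nat.factorial j)) with hF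
  set r : ℝ → ℝ := fun t => t ^ (a - 1) * (1 - t) ^ (b - a - 1) with hr
  -- norm computation on Ioo
  have hnorm : ∀ j : ℕ, ∀ t ∈ Ioo (0:ℝ) 1,
      ‖(t : ℂ) ^ ((((a + j : ℝ)) : ℂ) - 1) * ((1 : ℂ) - (t : ℂ)) ^ (((b - a : ℝ) : ℂ) - 1)‖
        = t ^ (a + j - 1) * (1 - t) ^ (b - a - 1) := by
    intro j t ht
    have h1t : (0:ℝ) < 1 - t := by linarith [ht.2]
    rw [norm_mul,
      Complex.norm_cpow_eq_rpow_re_of_pos ht.1]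
    have : ((1 : ℂ) - (t : ℂ)) = ((1 - t : ℝ) : ℂ) := by push_cast; ring
    rw [this, Complex.norm_cpow_eq_rpow_re_of_pos h1t]
    norm_num
  -- integrability of each F j
  have hg_int : ∀ j : ℕ, Integrable (fun t : ℝ =>
      (t : ℂ) ^ ((((a + j : ℝ)) : ℂ) - 1) * ((1 : ℂ) - (t : ℂ)) ^ (((b - a : ℝ) : ℂ) - 1)) μ := by
    intro j
    have := Complex.betaIntegral_convergent (u := (((a + j : ℝ)) : ℂ)) (v := (((b - a : ℝ)) : ℂ))
      (by simp; positivity) (by simpa using hba)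
    rwa [intervalIntegrable_iff_integrableOn_Ioc_of_le zero_le_one] at this
  have hF_int : ∀ j : ℕ, Integrable (F j) μ := fun j => (hg_int j).mul_const _
  have hr_int : Integrable r μ := by
    have h0 := (hg_int 0).norm
    refine h0.congr ?_
    filter_upwards [hIoo] with t ht
    have := hnorm 0 t ht
    rw [this]; simp [hr]
  have hr_nonneg : 0 ≤ ∫ t, r t ∂μ := by
    refine integral_nonneg_of_ae ?_
    filter_upwards [hIoo] with t ht
    exact mul_nonneg (Real.rpow_nonneg ht.1.le _)
      (Real.rpow_nonneg (by linarith [ht.2]) _)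
  -- bound on ∫ ‖F j‖
  have hFnorm : ∀ j : ℕ, (∫ t, ‖F j t‖ ∂μ) ≤ (∫ t, r t ∂μ) * (norm z ^ j / (Nat.factorial j)) := by
    intro j
    have hle : ∀ᵐ t ∂μ, ‖F j t‖ ≤ r t * (norm z ^ j / (Nat.factorial j)) := by
      filter_upwards [hIoo] with t ht
      rw [hF]
      simp only
      rw [norm_mul, hnorm j t ht]
      have h1 : ‖z ^ j / ((Nat.factorial j : ℂ))‖ = norm z ^ j / (Nat.factorial j) := by
        rw [norm_div, norm_pow]
        simp
      rw [h1]
      have h2 : t ^ (a + j - 1) ≤ t ^ (a - 1) := by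
        apply Real.rpow_le_rpow_of_exponent_ge ht.1 ht.2.le
        have : (0:ℝ) ≤ j := Nat.cast_nonneg j
        linarith
      have h3 : (0:ℝ) ≤ (1 - t) ^ (b - a - 1) := by
        apply Real.rpow_nonneg; linarith [ht.2]
      have h4 : (0:ℝ) ≤ norm z ^ j / (Nat.factorial j) := by positivity
      calc t ^ (a + j - 1) * (1 - t) ^ (b - a - 1) * (norm z ^ j / (Nat.factorial j))
          ≤ t ^ (a - 1) * (1 - t) ^ (b - a - 1) * (norm z ^ j / (Nat.factorial j)) := by
            apply mul_le_mul_of_nonneg_right _ h4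
            exact mul_le_mul_of_nonneg_right h2 h3
        _ = r t * (norm z ^ j / (Nat.factorial j)) := rfl
    calc (∫ t, ‖F j t‖ ∂μ) ≤ ∫ t, r t * (norm z ^ j / (Nat.factorial j)) ∂μ := by
          exact integral_mono_ae (hF_int j).norm (hr_int.mul_const _) hle
      _ = (∫ t, r t ∂μ) * (norm z ^ j / (Nat.factorial j)) := by
          exact integral_mul_const _ r
  have hsum : Summable fun j : ℕ => ∫ t, ‖F j t‖ ∂μ := by
    refine Summable.of_nonneg_of_le (fun j => integral_nonneg fun t => norm_nonneg _)
      (fun j => hFnorm j) ?_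
    exact (Real.summable_pow_div_factorial (norm z)).mul_left _
  have hswap : ∑' j : ℕ, (∫ t, F j t ∂μ) = ∫ t, (∑' j : ℕ, F j t) ∂μ :=
    integral_tsum_of_summable_integral_norm hF_int hsum
  -- Gamma nonvanishing
  have hΓba_ne : Complex.Gamma (((b - a : ℝ)) : ℂ) ≠ 0 := by
    rw [Complex.Gamma_ofReal]
    exact_mod_cast (Real.Gamma_pos_of_pos hba).ne'
  -- each series term as an integral
  have hterm : ∀ j : ℕ,
      Complex.Gamma ((a : ℂ) + j) / Complex.Gamma ((b : ℂ) + j) * z ^ j / (Nat.factorial j)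
        = (Complex.Gamma (((b - a : ℝ)) : ℂ))⁻¹ * ∫ t, F j t ∂μ := by
    intro j
    have hca : ((a : ℂ) + j) = (((a + j : ℝ)) : ℂ) := by push_cast; ring
    have hcb : ((b : ℂ) + j) = (((b + j : ℝ)) : ℂ) := by push_cast; ring
    have hs : 0 < ((((a + j : ℝ)) : ℂ)).re := by simp; positivity
    have ht' : 0 < ((((b - a : ℝ)) : ℂ)).re := by simpa using hba
    have hbeta := Complex.Gamma_mul_Gamma_eq_betaIntegral hs ht'
    have hsum' : (((a + j : ℝ)) : ℂ) + (((b - a : ℝ)) : ℂ) = (((b + j : ℝ)) : ℂ) := by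
      push_cast; ring
    rw [hsum'] at hbeta
    have hbi : Complex.betaIntegral (((a + j : ℝ)) : ℂ) (((b - a : ℝ)) : ℂ)
        = ∫ t, (t : ℂ) ^ ((((a + j : ℝ)) : ℂ) - 1) * ((1:ℂ) - (t:ℂ)) ^ ((((b - a : ℝ)) : ℂ) - 1) ∂μ := by
      rw [Complex.betaIntegral, intervalIntegral.integral_of_le zero_le_one]
    have hint : ∫ t, F j t ∂μ
        = Complex.betaIntegral (((a + j : ℝ)) : ℂ) (((b - a : ℝ)) : ℂ) * (z ^ j / (Nat.factorial j)) := by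
      rw [hF]
      simp only
      rw [integral_mul_const, ← hbi]
    have hΓbj_ne : Complex.Gamma ((((b + j : ℝ)) : ℂ)) ≠ 0 := by
      rw [Complex.Gamma_ofReal]
      exact_mod_cast (Real.Gamma_pos_of_pos (by positivity)).ne'
    have hbv : Complex.betaIntegral (((a + j : ℝ)) : ℂ) (((b - a : ℝ)) : ℂ)
        = Complex.Gamma (((a + j : ℝ)) : ℂ) * Complex.Gamma (((b - a : ℝ)) : ℂ)
            / Complex.Gamma (((b + j : ℝ)) : ℂ) := by
      rw [eq_div_iff hΓbj_ne]
      linear_combination -hbeta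
    rw [hca, hcb, hint, hbv]
    have hstep : Complex.Gamma (((a + j : ℝ)) : ℂ) * Complex.Gamma (((b - a : ℝ)) : ℂ)
          / Complex.Gamma (((b + j : ℝ)) : ℂ) * (z ^ j / (Nat.factorial j))
        = Complex.Gamma (((b - a : ℝ)) : ℂ) *
          (Complex.Gamma (((a + j : ℝ)) : ℂ) / Complex.Gamma (((b + j : ℝ)) : ℂ)
            * z ^ j / (Nat.factorial j)) := by ring
    rw [hstep, ← mul_assoc, inv_mul_cancel₀ hΓba_ne, one_mul]
  have hseries : (∑' j : ℕ,
      Complex.Gamma ((a : ℂ) + j) / Complex.Gamma ((b : ℂ) + j) * z ^ j / (Nat.factorial j))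
        = (Complex.Gamma (((b - a : ℝ)) : ℂ))⁻¹ * ∫ t, (∑' j : ℕ, F j t) ∂μ := by
    rw [← hswap, ← tsum_mul_left]
    exact tsum_congr hterm
  -- bound the integral of the summed series
  have hbound : ‖∫ t, (∑' j : ℕ, F j t) ∂μ‖ ≤ ∫ t, r t ∂μ := by
    refine norm_integral_le_of_norm_le hr_int ?_
    filter_upwards [hIoo] with t ht
    have ht0 : (t : ℂ) ≠ 0 := by exact_mod_cast ht.1.ne'
    have h1t : (0:ℝ) < 1 - t := by linarith [ht.2]
    have hexp : (∑' j : ℕ, (z * (t:ℂ)) ^ j / ((Nat.factorial j : ℂ))) = Complex.exp (z * t) := by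
      rw [Complex.exp_eq_exp_ℂ, NormedSpace.exp_eq_tsum_div]
    have hFt : ∀ j : ℕ, F j t =
        ((t : ℂ) ^ ((a : ℂ) - 1) * ((1:ℂ) - (t:ℂ)) ^ ((((b - a : ℝ)) : ℂ) - 1)) *
          ((z * (t:ℂ)) ^ j / (Nat.factorial j)) := by
      intro j
      rw [hF]
      simp only
      have he : ((((a + j : ℝ)) : ℂ)) - 1 = ((a : ℂ) - 1) + (j : ℂ) := by push_cast; ring
      rw [he, Complex.cpow_add _ _ ht0, Complex.cpow_natCast, mul_pow]
      ring
    rw [tsum_congr hFt, tsum_mul_left, hexp]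
    have hn1 : ‖(t:ℂ) ^ ((a : ℂ) - 1)‖ = t ^ (a - 1) := by
      rw [Complex.norm_cpow_eq_rpow_re_of_pos ht.1]
      norm_num
    have hn2 : ‖((1:ℂ) - (t:ℂ)) ^ ((((b - a : ℝ)) : ℂ) - 1)‖ = (1 - t) ^ (b - a - 1) := by
      have e3 : ((1:ℂ) - (t:ℂ)) = ((1 - t : ℝ) : ℂ) := by push_cast; ring
      rw [e3, Complex.norm_cpow_eq_rpow_re_of_pos h1t]
      norm_num
    have hn3 : ‖Complex.exp (z * (t:ℂ))‖ = 1 := by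
      rw [Complex.norm_exp]
      have : (z * (t:ℂ)).re = 0 := by
        simp [hz, Complex.mul_re, Complex.mul_im]
      rw [this, Real.exp_zero]
    rw [norm_mul, norm_mul, hn1, hn2, hn3, mul_one]
  -- value of the beta integral
  have hr_val : Real.Gamma a * Real.Gamma (b - a) = Real.Gamma b * ∫ t, r t ∂μ := by
    have hs0 : 0 < ((a : ℂ)).re := by simpa using ha
    have ht0' : 0 < ((((b - a : ℝ)) : ℂ)).re := by simpa using hba
    have hbeta0 := Complex.Gamma_mul_Gamma_eq_betaIntegral hs0 ht0'
    have hsum0 : (a : ℂ) + (((b - a : ℝ)) : ℂ) = (b : ℂ) := by push_cast; ring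
    rw [hsum0] at hbeta0
    have hbi0 : Complex.betaIntegral (a : ℂ) (((b - a : ℝ)) : ℂ) = ((∫ t, r t ∂μ : ℝ) : ℂ) := by
      have hcg : (∫ t, (t : ℂ) ^ ((a:ℂ) - 1) * ((1:ℂ) - (t:ℂ)) ^ ((((b - a : ℝ)) : ℂ) - 1) ∂μ)
          = ∫ t, ((r t : ℝ) : ℂ) ∂μ := by
        refine integral_congr_ae ?_
        filter_upwards [hIoo] with t ht
        have h1t : (0:ℝ) ≤ 1 - t := by linarith [ht.2]
        have e1 : ((a : ℂ) - 1) = ((a - 1 : ℝ) : ℂ) := by push_cast; ring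
        have e2 : ((((b - a : ℝ)) : ℂ) - 1) = ((b - a - 1 : ℝ) : ℂ) := by push_cast; ring
        have e3 : ((1:ℂ) - (t:ℂ)) = ((1 - t : ℝ) : ℂ) := by push_cast; ring
        rw [e1, e3, e2, ← Complex.ofReal_cpow ht.1.le, ← Complex.ofReal_cpow h1t]
        rw [hr]
        push_cast
        ring
      rw [Complex.betaIntegral, intervalIntegral.integral_of_le zero_le_one, hcg]
      exact integral_ofReal
    rw [hbi0, Complex.Gamma_ofReal, Complex.Gamma_ofReal, Complex.Gamma_ofReal] at hbeta0
    exact_mod_cast hbeta0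
  -- put everything together
  have hGa := Real.Gamma_pos_of_pos ha
  have hGb := Real.Gamma_pos_of_pos hb
  have hGba := Real.Gamma_pos_of_pos hba
  unfold hyp1F1
  rw [hseries, norm_mul, norm_mul, norm_div, norm_inv, Complex.Gamma_ofReal,
    Complex.Gamma_ofReal, Complex.Gamma_ofReal, Complex.norm_real, Complex.norm_real,
    Complex.norm_real, Real.norm_eq_abs, Real.norm_eq_abs, Real.norm_eq_abs, abs_of_pos hGa, abs_of_pos hGb, abs_of_pos hGba]
  have hle2 : norm (∫ t, (∑' j : ℕ, F j t) ∂μ) ≤ ∫ t, r t ∂μ := hbound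
  calc Real.Gamma b / Real.Gamma a *
        ((Real.Gamma (b - a))⁻¹ * norm (∫ t, (∑' j : ℕ, F j t) ∂μ))
      ≤ Real.Gamma b / Real.Gamma a * ((Real.Gamma (b - a))⁻¹ * ∫ t, r t ∂μ) := by
        apply mul_le_mul_of_nonneg_left _ (by positivity)
        exact mul_le_mul_of_nonneg_left hle2 (by positivity)
    _ = 1 := by
        rw [div_mul_eq_mul_div, eq_comm]
        rw [eq_div_iff (by positivity)]
        field_simp
        linarith [hr_val]

lemma Ieps_abs_le (ε : ℤ) (hε : ε = 1 ∨ ε = -1) (K : ℕ) (hK : 1 ≤ K) (x : ℝ) (hx : 0 < x) :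
    norm (Ieps ε 0 0 K x) ≤
      x ^ ((1:ℝ)/2 - K) * ((Nat.factorial (K-1) : ℝ) / (Nat.factorial (2*K-1))) := by
  rw [Ieps]
  rw [norm_mul, norm_mul, norm_mul]
  -- phase has modulus 1
  have h1 : norm (e2 ((ε : ℂ) / 8 - ε * K / 4)) = 1 := by
    have e : ((ε : ℂ) / 8 - ε * K / 4) = (((ε : ℝ) / 8 - ε * K / 4 : ℝ) : ℂ) := by push_cast; ring
    rw [e, abs_e2_real]
  -- power
  have h2 : norm ((x : ℂ) ^ ((1 : ℂ) / 2 - K)) = x ^ ((1:ℝ)/2 - K) := by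
    rw [Complex.norm_cpow_eq_rpow_re_of_pos hx]
    norm_num
  -- Gamma ratio
  have hKc : ((K : ℂ)) = ((K - 1 : ℕ) : ℂ) + 1 := by
    have : (K - 1 : ℕ) + 1 = K := by omega
    exact_mod_cast (congrArg (fun n : ℕ => (n : ℂ)) this).symm
  have h2Kc : (2 * (K : ℂ)) = ((2 * K - 1 : ℕ) : ℂ) + 1 := by
    have : (2 * K - 1 : ℕ) + 1 = 2 * K := by omega
    have h' : (((2 * K - 1 : ℕ) : ℂ)) + 1 = ((2 * K : ℕ) : ℂ) := by exact_mod_cast congrArg (fun n : ℕ => (n : ℂ)) this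
    rw [h']; push_cast; ring
  have h3 : norm (Complex.Gamma ((K : ℂ) - 0 - 0) / Complex.Gamma (2 * K)) =
      (Nat.factorial (K-1) : ℝ) / (Nat.factorial (2*K-1)) := by
    have ha' : ((K : ℂ) - 0 - 0) = ((K - 1 : ℕ) : ℂ) + 1 := by rw [← hKc]; ring
    rw [ha', h2Kc, Complex.Gamma_nat_eq_factorial, Complex.Gamma_nat_eq_factorial, norm_div,
      Complex.norm_natCast, Complex.norm_natCast]
  -- hypergeometric factor
  have h4 : norm (hyp1F1 ((K : ℂ) - 0 - 0) (2 * K) (-(e2 (-(ε : ℂ) / 4)) / x)) ≤ 1 := by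
    have hKr : ((K : ℂ) - 0 - 0) = (((K : ℝ)) : ℂ) := by push_cast; ring
    have h2Kr : (2 * (K : ℂ)) = (((2 * K : ℝ)) : ℂ) := by push_cast; ring
    have hlt : (K : ℝ) < 2 * K := by
      have : (1:ℝ) ≤ K := by exact_mod_cast hK
      linarith
    rcases hε with h | h
    · have : (-(e2 (-(ε : ℂ) / 4)) / x) = Complex.I * ((1 / x : ℝ) : ℂ) := by
        rw [h]
        push_cast
        rw [show (-(1:ℂ)/4) = -(1/4) by ring, e2_neg_quarter]
        push_cast
        field_simp
      rw [this, hKr, h2Kr]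
      exact hyp1F1_abs_le_one (K : ℝ) (2 * K : ℝ) (Nat.cast_pos.mpr (by omega)) hlt _
    · have : (-(e2 (-(ε : ℂ) / 4)) / x) = Complex.I * ((-(1 / x) : ℝ) : ℂ) := by
        rw [h]
        push_cast
        rw [show (-(-1:ℂ)/4) = (1/4 : ℂ) by ring, e2_quarter]
        push_cast
        field_simp
      rw [this, hKr, h2Kr]
      exact hyp1F1_abs_le_one (K : ℝ) (2 * K : ℝ) (Nat.cast_pos.mpr (by omega)) hlt _
  rw [h1, h2, h3, one_mul]
  calc x ^ ((1:ℝ)/2 - K) * ((Nat.factorial (K-1) : ℝ) / (Nat.factorial (2*K-1))) *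
        norm (hyp1F1 ((K : ℂ) - 0 - 0) (2 * K) (-(e2 (-(ε : ℂ) / 4)) / x))
      ≤ x ^ ((1:ℝ)/2 - K) * ((Nat.factorial (K-1) : ℝ) / (Nat.factorial (2*K-1))) * 1 := by
        apply mul_le_mul_of_nonneg_left h4
        positivity
    _ = _ := by rw [mul_one]

lemma Tlk_abs_le (l k c n : ℕ) (hl : 0 < l) (hk : 0 < k) (hc : 0 < c) (hn : 0 < n) :
    norm (Tlk l k c n) ≤
      (2 * Real.pi * l) ^ (2 * (k:ℝ) - 1/2) * ((c:ℝ) * n) ^ (-(2 * (k:ℝ))) *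
        ((Nat.factorial (2*k-1) : ℝ) / (Nat.factorial (4*k-1))) := by
  have hπ := Real.pi_pos
  have hP : (0:ℝ) < (c:ℝ) * n := by positivity
  have hL : (0:ℝ) < 2 * Real.pi * l := by positivity
  have hx : (0:ℝ) < (c:ℝ) * n / (2 * Real.pi * l) := by positivity
  set x : ℝ := (c:ℝ) * n / (2 * Real.pi * l) with hxdef
  set R : ℝ := (Nat.factorial (2*(2*k)-1) : ℝ) / (Nat.factorial (2*(2*k)-1 + 2*k)) with hRdef
  -- bound each Ieps
  have hI1 := Ieps_abs_le (-1) (Or.inr rfl) (2*k) (by omega) x hx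
  have hI2 := Ieps_abs_le 1 (Or.inl rfl) (2*k) (by omega) x hx
  have h42 : 2*(2*k)-1 = 4*k-1 := by omega
  rw [h42] at hI1 hI2
  -- common bound
  set X : ℝ := x ^ ((1:ℝ)/2 - ((2*k : ℕ) : ℝ)) * ((Nat.factorial (2*k-1) : ℝ) / (Nat.factorial (4*k-1)))
    with hXdef
  have hI1' : norm (Ieps (-1) 0 0 (2*k) x) ≤ X := hI1
  have hI2' : norm (Ieps 1 0 0 (2*k) x) ≤ X := hI2
  have hXnn : 0 ≤ X := le_trans (norm_nonneg _) hI2'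
  -- phases
  have hph1 : norm (e2 (((nstar c n * l : ℕ) : ℂ) / (c : ℂ) + 1 / 8)) = 1 := by
    have e : (((nstar c n * l : ℕ) : ℂ) / (c : ℂ) + 1 / 8)
        = ((((nstar c n * l : ℕ) : ℝ) / (c : ℝ) + 1 / 8 : ℝ) : ℂ) := by push_cast; ring
    rw [e, abs_e2_real]
  have hph2 : norm (e2 (-(((nstar c n * l : ℕ) : ℂ) / (c : ℂ)) - 1 / 8)) = 1 := by
    have e : (-(((nstar c n * l : ℕ) : ℂ) / (c : ℂ)) - 1 / 8)
        = ((-(((nstar c n * l : ℕ) : ℝ) / (c : ℝ)) - 1 / 8 : ℝ) : ℂ) := by push_cast; ring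
    rw [e, abs_e2_real]
  -- assemble
  rw [Tlk, norm_mul, norm_mul]
  simp only [norm_div, norm_one, Complex.norm_real, Real.norm_eq_abs, abs_div, abs_one]
  rw [_root_.abs_of_nonneg (Real.sqrt_nonneg ((c:ℝ)*(n:ℝ))),
    _root_.abs_of_nonneg (Real.sqrt_nonneg (2*Real.pi))]
  rw [← hxdef]
  have habs_sum : norm
      (e2 (((nstar c n * l : ℕ) : ℂ) / (c : ℂ) + 1 / 8) * Ieps (-1) 0 0 (2*k) x
        + e2 (-(((nstar c n * l : ℕ) : ℂ) / (c : ℂ)) - 1 / 8) * Ieps 1 0 0 (2*k) x) ≤ 2 * X := by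
    calc norm _ ≤ norm (e2 (((nstar c n * l : ℕ) : ℂ) / (c : ℂ) + 1 / 8) *
            Ieps (-1) 0 0 (2*k) x)
          + norm (e2 (-(((nstar c n * l : ℕ) : ℂ) / (c : ℂ)) - 1 / 8) *
            Ieps 1 0 0 (2*k) x) := norm_add_le _ _
      _ ≤ 2 * X := by
          rw [norm_mul, norm_mul, hph1, hph2, one_mul, one_mul]
          linarith [hI1', hI2']
  have h2π : (2:ℝ) ≤ Real.sqrt (2*Real.pi) := by
    have h1 := Real.sqrt_le_sqrt (show (4:ℝ) ≤ 2*Real.pi by nlinarith [Real.pi_gt_three])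
    rwa [show Real.sqrt 4 = 2 from by
      rw [show (4:ℝ) = 2^2 by norm_num, Real.sqrt_sq (by norm_num : (0:ℝ) ≤ 2)]] at h1
  have hfrac : (1 / Real.sqrt (2*Real.pi)) * 2 ≤ 1 := by
    rw [div_mul_eq_mul_div, one_mul, div_le_one (by positivity)]
    exact h2π
  set Pn : ℝ := (c:ℝ)*(n:ℝ) with hPn
  set Ln : ℝ := 2*Real.pi*(l:ℝ) with hLn
  have hcast : ((2*k : ℕ) : ℝ) = 2*(k:ℝ) := by push_cast; ring
  have key : (1/Real.sqrt Pn) * X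
      = Ln^(2*(k:ℝ)-1/2) * (Pn^(-(2*(k:ℝ)))) *
        ((Nat.factorial (2*k-1) : ℝ)/(Nat.factorial (4*k-1))) := by
    rw [hXdef, hcast, hxdef]
    rw [Real.div_rpow hP.le hL.le, Real.sqrt_eq_rpow, one_div, ← Real.rpow_neg hP.le]
    rw [show Pn ^ ((1:ℝ)/2 - 2*(k:ℝ)) / Ln ^ ((1:ℝ)/2 - 2*(k:ℝ))
        = Pn ^ ((1:ℝ)/2 - 2*(k:ℝ)) * Ln ^ (2*(k:ℝ)-1/2) from by
      rw [show (2*(k:ℝ)-1/2) = -((1:ℝ)/2 - 2*(k:ℝ)) by ring, Real.rpow_neg hL.le,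
        div_eq_mul_inv]]
    rw [show Pn ^ (-((1:ℝ)/2)) * (Pn ^ ((1:ℝ)/2 - 2*(k:ℝ)) * Ln ^ (2*(k:ℝ)-1/2) *
          ((Nat.factorial (2*k-1) : ℝ)/(Nat.factorial (4*k-1))))
        = (Pn ^ (-((1:ℝ)/2)) * Pn ^ ((1:ℝ)/2 - 2*(k:ℝ))) * Ln ^ (2*(k:ℝ)-1/2) *
          ((Nat.factorial (2*k-1) : ℝ)/(Nat.factorial (4*k-1))) from by ring]
    rw [← Real.rpow_add hP]
    rw [show (-((1:ℝ)/2) + ((1:ℝ)/2 - 2*(k:ℝ))) = -(2*(k:ℝ)) by ring]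
    ring
  calc (1 / Real.sqrt Pn) * (1 / Real.sqrt (2*Real.pi)) *
        norm (e2 (((nstar c n * l : ℕ) : ℂ) / (c : ℂ) + 1 / 8) * Ieps (-1) 0 0 (2*k) x
          + e2 (-(((nstar c n * l : ℕ) : ℂ) / (c : ℂ)) - 1 / 8) * Ieps 1 0 0 (2*k) x)
      ≤ (1 / Real.sqrt Pn) * (1 / Real.sqrt (2*Real.pi)) * (2 * X) := by
        apply mul_le_mul_of_nonneg_left habs_sum (by positivity)
    _ = ((1 / Real.sqrt (2*Real.pi)) * 2) * ((1 / Real.sqrt Pn) * X) := by ring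
    _ ≤ 1 * ((1 / Real.sqrt Pn) * X) := by
        apply mul_le_mul_of_nonneg_right hfrac
        positivity
    _ = (1 / Real.sqrt Pn) * X := by ring
    _ = _ := key

lemma stirling_lower (n : ℕ) (hn : 1 ≤ n) :
    Real.sqrt Real.pi * (Real.sqrt (2*n) * ((n:ℝ)/Real.exp 1)^n) ≤ (Nat.factorial n : ℝ) := by
  have hD : (0:ℝ) < Real.sqrt (2*n) * ((n:ℝ)/Real.exp 1)^n := by
    have : (0:ℝ) < n := by exact_mod_cast hn
    positivity
  have hs : Real.sqrt Real.pi ≤ Stirling.stirlingSeq n := by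
    obtain ⟨m, rfl⟩ := Nat.exists_eq_add_of_le hn
    have := Stirling.stirlingSeq'_antitone.le_of_tendsto
      (Stirling.tendsto_stirlingSeq_sqrt_pi.comp (tendsto_add_atTop_nat 1)) m
    simpa [Function.comp, Nat.add_comm] using this
  have := mul_le_mul_of_nonneg_right hs hD.le
  rwa [Stirling.stirlingSeq, div_mul_cancel₀] at this
  exact hD.ne'
lemma stirling_upper (n : ℕ) (hn : 1 ≤ n) :
    (Nat.factorial n : ℝ) ≤ (Real.exp 1 / Real.sqrt 2) * (Real.sqrt (2*n) * ((n:ℝ)/Real.exp 1)^n) := by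
  have hD : (0:ℝ) < Real.sqrt (2*n) * ((n:ℝ)/Real.exp 1)^n := by
    have : (0:ℝ) < n := by exact_mod_cast hn
    positivity
  have hs : Stirling.stirlingSeq n ≤ Real.exp 1 / Real.sqrt 2 := by
    obtain ⟨m, rfl⟩ := Nat.exists_eq_add_of_le hn
    have h1 := Stirling.stirlingSeq'_antitone (Nat.zero_le m)
    simp only [Function.comp] at h1
    calc Stirling.stirlingSeq (1 + m) = Stirling.stirlingSeq (m + 1) := by rw [Nat.add_comm]
      _ ≤ Stirling.stirlingSeq (0 + 1) := h1
      _ = Real.exp 1 / Real.sqrt 2 := by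
          rw [show (0+1 : ℕ) = 1 from rfl, Stirling.stirlingSeq_one]
  have := mul_le_mul_of_nonneg_right hs hD.le
  rwa [Stirling.stirlingSeq, div_mul_cancel₀] at this
  exact hD.ne'

lemma fact_ratio_bound (m : ℕ) (hm : 1 ≤ m) :
    ((Nat.factorial (m-1) : ℝ) / (Nat.factorial (2*m-1))) * (((m:ℝ))/5)^m
      ≤ 2 * (Real.exp 1/20)^m := by
  set E := Real.exp 1 with hE
  have hE0 : (0:ℝ) < E := Real.exp_pos 1
  have hm0 : (0:ℝ) < m := by exact_mod_cast hm
  have h2m : (1:ℕ) ≤ 2*m := by omega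
  have h2m0 : (0:ℝ) < (2*m : ℕ) := by exact_mod_cast h2m
  -- reduce to G3
  have hfact1 : ((m:ℝ)) * ((Nat.factorial (m-1) : ℝ)) = (Nat.factorial m : ℝ) := by
    exact_mod_cast Nat.mul_factorial_pred (by omega : m ≠ 0)
  have hfact2 : (((2*m : ℕ):ℝ)) * ((Nat.factorial (2*m-1) : ℝ)) = (Nat.factorial (2*m) : ℝ) := by
    exact_mod_cast Nat.mul_factorial_pred (by omega : 2*m ≠ 0)
  have hG3 : (Nat.factorial m : ℝ) * (((m:ℝ))/5)^m ≤ (E/20)^m * (Nat.factorial (2*m) : ℝ) := by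
    have hup := stirling_upper m hm
    have hlo := stirling_lower (2*m) h2m
    have hQ : ((m:ℝ)/E)^m * (((m:ℝ))/5)^m = ((m:ℝ)^2/(5*E))^m := by
      rw [← mul_pow]
      congr 1
      field_simp
    have hR : (E/20)^m * ((((2*m:ℕ)):ℝ)/E)^(2*m) = ((m:ℝ)^2/(5*E))^m := by
      rw [pow_mul, ← mul_pow]
      congr 1
      have : (((2*m:ℕ)):ℝ) = 2*(m:ℝ) := by push_cast; ring
      rw [this]
      field_simp
      ring
    have hcoef : (E/Real.sqrt 2) * Real.sqrt (2*(m:ℕ)) ≤ Real.sqrt Real.pi * Real.sqrt (2*((2*m:ℕ):ℝ)) := by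
      have hs4 : Real.sqrt (2*((2*m:ℕ):ℝ)) = Real.sqrt 2 * Real.sqrt (2*(m:ℕ)) := by
        rw [← Real.sqrt_mul (by norm_num : (0:ℝ) ≤ 2)]
        congr 1
        push_cast
        ring
      rw [hs4]
      have hEle : E ≤ 2 * Real.sqrt Real.pi := by
        have h3 : (3:ℝ) ≤ 2 * Real.sqrt Real.pi := by
          have : Real.sqrt (9/4) ≤ Real.sqrt Real.pi :=
            Real.sqrt_le_sqrt (by nlinarith [Real.pi_gt_three])
          have h94 : Real.sqrt ((9:ℝ)/4) = 3/2 := by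
            rw [show (9:ℝ)/4 = (3/2)^2 by norm_num, Real.sqrt_sq (by norm_num : (0:ℝ) ≤ 3/2)]
          linarith [this, h94 ▸ this]
        have he3 : E ≤ 3 := by
          have := Real.exp_one_lt_d9
          linarith
        linarith
      have hsq2 : (0:ℝ) < Real.sqrt 2 := by positivity
      have hsqm : (0:ℝ) ≤ Real.sqrt (2*(m:ℕ)) := Real.sqrt_nonneg _
      have : E / Real.sqrt 2 ≤ Real.sqrt Real.pi * Real.sqrt 2 := by
        rw [div_le_iff₀ hsq2]
        calc E ≤ 2 * Real.sqrt Real.pi := hEle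
          _ = Real.sqrt Real.pi * Real.sqrt 2 * Real.sqrt 2 := by
              rw [mul_assoc, Real.mul_self_sqrt (by norm_num : (0:ℝ) ≤ 2)]
              ring
        -- gives E ≤ (√π √2) √2
      calc (E/Real.sqrt 2) * Real.sqrt (2*(m:ℕ))
          ≤ (Real.sqrt Real.pi * Real.sqrt 2) * Real.sqrt (2*(m:ℕ)) :=
            mul_le_mul_of_nonneg_right this hsqm
        _ = Real.sqrt Real.pi * (Real.sqrt 2 * Real.sqrt (2*(m:ℕ))) := by ring
    -- assemble
    have hQnn : (0:ℝ) ≤ ((m:ℝ)^2/(5*E))^m := by positivity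
    calc (Nat.factorial m : ℝ) * (((m:ℝ))/5)^m
        ≤ ((E/Real.sqrt 2) * (Real.sqrt (2*(m:ℕ)) * ((m:ℝ)/E)^m)) * (((m:ℝ))/5)^m := by
          apply mul_le_mul_of_nonneg_right hup
          positivity
      _ = ((E/Real.sqrt 2) * Real.sqrt (2*(m:ℕ))) * (((m:ℝ)/E)^m * (((m:ℝ))/5)^m) := by ring
      _ = ((E/Real.sqrt 2) * Real.sqrt (2*(m:ℕ))) * ((m:ℝ)^2/(5*E))^m := by rw [hQ]
      _ ≤ (Real.sqrt Real.pi * Real.sqrt (2*((2*m:ℕ):ℝ))) * ((m:ℝ)^2/(5*E))^m :=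
          mul_le_mul_of_nonneg_right hcoef hQnn
      _ = (E/20)^m * (Real.sqrt Real.pi * (Real.sqrt (2*((2*m:ℕ):ℝ)) * ((((2*m:ℕ)):ℝ)/E)^(2*m))) := by
          rw [← hR]; ring
      _ ≤ (E/20)^m * (Nat.factorial (2*m) : ℝ) := by
          apply mul_le_mul_of_nonneg_left hlo
          positivity
  -- from G3 to the goal
  rw [div_mul_eq_mul_div, div_le_iff₀ (by positivity : (0:ℝ) < (Nat.factorial (2*m-1) : ℝ))]
  -- goal : (m-1)! * (m/5)^m ≤ 2*(E/20)^m * (2m-1)!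
  rw [← mul_le_mul_iff_right₀ hm0]
  calc (m:ℝ) * ((Nat.factorial (m-1) : ℝ) * (((m:ℝ))/5)^m)
      = (Nat.factorial m : ℝ) * (((m:ℝ))/5)^m := by rw [← hfact1]; ring
    _ ≤ (E/20)^m * (Nat.factorial (2*m) : ℝ) := hG3
    _ = (m:ℝ) * (2 * (E/20)^m * (Nat.factorial (2*m-1) : ℝ)) := by
        rw [← hfact2]; push_cast; ring

end AuxProofs

set_option maxHeartbeats 2000000 in
open Classical in
theorem stmt10 (ε : ℝ) (hε : 0 < ε) :
    ∃ A > 0, ∀ l k : ℕ, 0 < l → 0 < k →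
      ‖W1 l k‖ ≤
        A * (l : ℝ) ^ ((1 : ℝ) / 2 + ε) * (k : ℝ)⁻¹ * (Real.exp 1 / 20) ^ (2 * k) := by
  have hπ := Real.pi_pos
  set ε' : ℝ := min ε (1/2) with hε'def
  have hε'0 : 0 < ε' := lt_min hε (by norm_num)
  have hε'le : ε' ≤ ε := min_le_left _ _
  have hε'half : ε' ≤ 1/2 := min_le_right _ _
  set s : ℝ := 1 + ε' with hsdef
  have hs1 : 1 < s := by simp only [hsdef]; linarith
  have hs32 : s ≤ 3/2 := by simp only [hsdef]; linarith
  have hZsum : Summable (fun n : ℕ => (n:ℝ) ^ (-s)) := by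
    rw [Real.summable_nat_rpow]
    linarith
  set Z : ℝ := ∑' n : ℕ, (n:ℝ) ^ (-s) with hZdef
  have hZ0 : 0 ≤ Z := tsum_nonneg (fun n => Real.rpow_nonneg (Nat.cast_nonneg n) _)
  refine ⟨2 * (5*Real.pi)^s * Z^2 + 1, by positivity, ?_⟩
  intro l k hl hk
  have hl1 : (1:ℝ) ≤ l := by exact_mod_cast hl
  have hk1 : (1:ℝ) ≤ k := by exact_mod_cast hk
  have hl0 : (0:ℝ) < l := by linarith
  have hk0 : (0:ℝ) < k := by linarith
  set L : ℝ := 2*Real.pi*l with hLdef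
  have hL0 : 0 < L := by positivity
  set T : ℝ := 5*Real.pi*l/k with hTdef
  have hT0 : 0 < T := by positivity
  set G : ℝ := (Nat.factorial (2*k-1):ℝ)/(Nat.factorial (4*k-1)) with hGdef
  have hG0 : 0 ≤ G := by positivity
  have hs2k : s ≤ 2*(k:ℝ) := by linarith
  set D : ℝ := L^(2*(k:ℝ)-1/2) * T^(s-2*(k:ℝ)) * G with hDdef
  have hD0 : 0 ≤ D := by positivity
  set g : ℕ×ℕ → ℝ := fun p => D * ((p.1:ℝ)^(-s) * (p.2:ℝ)^(-s)) with hgdef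
  have hwsum : Summable (fun p : ℕ×ℕ => (p.1:ℝ)^(-s) * (p.2:ℝ)^(-s)) :=
    hZsum.mul_of_nonneg hZsum (fun n => Real.rpow_nonneg (Nat.cast_nonneg n) _)
      (fun n => Real.rpow_nonneg (Nat.cast_nonneg n) _)
  have hgsum : Summable g := hwsum.mul_left D
  have hg0 : ∀ p : ℕ×ℕ, 0 ≤ g p := fun p =>
    mul_nonneg hD0 (mul_nonneg (Real.rpow_nonneg (Nat.cast_nonneg _) _)
      (Real.rpow_nonneg (Nat.cast_nonneg _) _))
  -- the pointwise bound
  have hfg : ∀ p : ℕ × ℕ,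
      ‖(if 0 < p.1 ∧ 0 < p.2 ∧ Nat.Coprime p.2 p.1 ∧
          Real.pi * l / ((p.1 : ℝ) * p.2) < (k : ℝ) / 5
        then Tlk l k p.1 p.2 else 0)‖ ≤ g p := by
    intro p
    by_cases hcond : 0 < p.1 ∧ 0 < p.2 ∧ Nat.Coprime p.2 p.1 ∧
        Real.pi * l / ((p.1 : ℝ) * p.2) < (k : ℝ) / 5
    · rw [if_pos hcond]
      obtain ⟨hc, hn, -, hlt⟩ := hcond
      set c := p.1
      set n := p.2
      have hc0 : (0:ℝ) < c := by exact_mod_cast hc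
      have hn0 : (0:ℝ) < n := by exact_mod_cast hn
      have hcn0 : (0:ℝ) < (c:ℝ)*n := by positivity
      -- T < c*n
      have hTcn : T ≤ (c:ℝ)*n := by
        rw [div_lt_div_iff₀ hcn0 (by norm_num : (0:ℝ) < 5)] at hlt
        rw [hTdef, div_le_iff₀ hk0]
        nlinarith
      have hmain := Tlk_abs_le l k c n hl hk hc hn
      refine hmain.trans ?_
      -- split the rpow
      have hsplit : ((c:ℝ)*n) ^ (-(2*(k:ℝ))) = ((c:ℝ)*n)^(-s) * ((c:ℝ)*n)^(s-2*(k:ℝ)) := by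
        rw [← Real.rpow_add hcn0]
        congr 1
        ring
      have hTle : ((c:ℝ)*n)^(s-2*(k:ℝ)) ≤ T^(s-2*(k:ℝ)) :=
        Real.rpow_le_rpow_of_nonpos hT0 hTcn (by linarith)
      have hmulr : ((c:ℝ)*n)^(-s) = (c:ℝ)^(-s) * (n:ℝ)^(-s) :=
        Real.mul_rpow hc0.le hn0.le
      calc L^(2*(k:ℝ)-1/2) * ((c:ℝ)*n) ^ (-(2*(k:ℝ))) * G
          = (L^(2*(k:ℝ)-1/2) * G * ((c:ℝ)^(-s) * (n:ℝ)^(-s))) * ((c:ℝ)*n)^(s-2*(k:ℝ)) := by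
            rw [hsplit, hmulr]; ring
        _ ≤ (L^(2*(k:ℝ)-1/2) * G * ((c:ℝ)^(-s) * (n:ℝ)^(-s))) * T^(s-2*(k:ℝ)) := by
            apply mul_le_mul_of_nonneg_left hTle
            positivity
        _ = g (c, n) := by rw [hgdef]; simp only; rw [hDdef]; ring
    · rw [if_neg hcond]
      simpa using hg0 p
  have hnormsum : Summable (fun p : ℕ × ℕ =>
      ‖(if 0 < p.1 ∧ 0 < p.2 ∧ Nat.Coprime p.2 p.1 ∧
          Real.pi * l / ((p.1 : ℝ) * p.2) < (k : ℝ) / 5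
        then Tlk l k p.1 p.2 else 0)‖) :=
    Summable.of_nonneg_of_le (fun p => norm_nonneg _) hfg hgsum
  have habs : norm (W1 l k) ≤ ∑' p : ℕ×ℕ, g p := by
    rw [W1]
    refine le_trans (norm_tsum_le_tsum_norm hnormsum) ?_
    exact Summable.tsum_le_tsum hfg hnormsum hgsum
  -- evaluate the sum of g
  have hgval : ∑' p : ℕ×ℕ, g p = D * (Z * Z) := by
    rw [hgdef, tsum_mul_left]
    congr 1
    rw [Summable.tsum_prod' hwsum (fun b => by
      simpa using hZsum.mul_left ((b:ℝ)^(-s)))]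
    calc ∑' (a : ℕ) (b : ℕ), (a:ℝ)^(-s) * (b:ℝ)^(-s)
        = ∑' (a : ℕ), (a:ℝ)^(-s) * Z := by
          refine tsum_congr fun a => ?_
          rw [tsum_mul_left]
      _ = Z * Z := by rw [tsum_mul_right]
  -- bound D
  have hquot : L / T = 2*(k:ℝ)/5 := by
    rw [hLdef, hTdef]
    field_simp
  have hLT : L^(2*(k:ℝ)-1/2) * T^(s-2*(k:ℝ))
      = L^(-(1/2:ℝ)) * T^s * ((2*(k:ℝ))/5)^(2*(k:ℝ)) := by
    have e1 : L^(2*(k:ℝ)-1/2) = L^(-(1/2:ℝ)) * L^(2*(k:ℝ)) := by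
      rw [← Real.rpow_add hL0]; congr 1; ring
    have e2 : T^(s-2*(k:ℝ)) = T^s * (T^(2*(k:ℝ)))⁻¹ := by
      rw [← Real.rpow_neg hT0.le, ← Real.rpow_add hT0]; congr 1
    rw [e1, e2, ← hquot, Real.div_rpow hL0.le hT0.le]
    field_simp
  -- factorial ratio bound
  have hfrb : G * ((2*(k:ℝ))/5)^(2*(k:ℝ)) ≤ 2 * (Real.exp 1/20)^(2*k) := by
    have h1 := fact_ratio_bound (2*k) (by omega)
    have h2 : (2*(2*k)-1 : ℕ) = 4*k-1 := by omega
    have h3 : (2*k-1 : ℕ) = 2*k-1 := rfl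
    rw [h2] at h1
    have h4 : (((2*k : ℕ)):ℝ) = 2*(k:ℝ) := by push_cast; ring
    rw [h4] at h1
    have h5 : ((2*(k:ℝ))/5)^(2*(k:ℝ)) = ((2*(k:ℝ))/5)^(2*k : ℕ) := by
      rw [show (2*(k:ℝ)) = (((2*k : ℕ)):ℝ) by push_cast; ring, Real.rpow_natCast]
    rw [h5]
    exact h1
  have hLl : L^(-(1/2:ℝ)) ≤ (l:ℝ)^(-(1/2:ℝ)) := by
    apply Real.rpow_le_rpow_of_nonpos hl0 _ (by norm_num)
    rw [hLdef]
    nlinarith [Real.pi_gt_three]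
  have hTs : T^s = (5*Real.pi)^s * ((l:ℝ)^s * (k:ℝ)^(-s)) := by
    rw [hTdef, Real.div_rpow (by positivity) hk0.le,
      show (5*Real.pi*(l:ℝ)) = (5*Real.pi)*(l:ℝ) by ring,
      Real.mul_rpow (by positivity) hl0.le, Real.rpow_neg hk0.le]
    ring
  have hls : (l:ℝ)^(-(1/2:ℝ)) * (l:ℝ)^s ≤ (l:ℝ)^((1:ℝ)/2 + ε) := by
    rw [← Real.rpow_add hl0]
    apply Real.rpow_le_rpow_of_exponent_le hl1
    simp only [hsdef]
    linarith
  have hks : (k:ℝ)^(-s) ≤ (k:ℝ)⁻¹ := by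
    rw [show ((k:ℝ))⁻¹ = (k:ℝ)^(-(1:ℝ)) by rw [Real.rpow_neg_one]]
    apply Real.rpow_le_rpow_of_exponent_le hk1
    linarith
  -- final combination
  have hD_le : D ≤ (5*Real.pi)^s * ((l:ℝ)^((1:ℝ)/2+ε) * ((k:ℝ)⁻¹ * (2 * (Real.exp 1/20)^(2*k)))) := by
    rw [hDdef, hLT]
    have hstep1 : L^(-(1/2:ℝ)) * T^s * ((2*(k:ℝ))/5)^(2*(k:ℝ)) * G
        = (5*Real.pi)^s * (((l:ℝ)^(-(1/2:ℝ)) * (l:ℝ)^s) * ((k:ℝ)^(-s) *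
            (G * ((2*(k:ℝ))/5)^(2*(k:ℝ))))) *
          (L^(-(1/2:ℝ)) / (l:ℝ)^(-(1/2:ℝ))) := by
      rw [hTs]
      field_simp
    rw [hstep1]
    have hdivle : L^(-(1/2:ℝ)) / (l:ℝ)^(-(1/2:ℝ)) ≤ 1 := by
      rw [div_le_one (by positivity)]
      exact hLl
    have hA0 : (0:ℝ) ≤ (5*Real.pi)^s := by positivity
    have hB : ((l:ℝ)^(-(1/2:ℝ)) * (l:ℝ)^s) * ((k:ℝ)^(-s) * (G * ((2*(k:ℝ))/5)^(2*(k:ℝ))))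
        ≤ (l:ℝ)^((1:ℝ)/2+ε) * ((k:ℝ)⁻¹ * (2 * (Real.exp 1/20)^(2*k))) := by
      have hx1 : (0:ℝ) ≤ (k:ℝ)^(-s) * (G * ((2*(k:ℝ))/5)^(2*(k:ℝ))) := by positivity
      have hy1 : (0:ℝ) ≤ (l:ℝ)^((1:ℝ)/2+ε) := by positivity
      refine mul_le_mul hls ?_ hx1 hy1
      have hx2 : (0:ℝ) ≤ G * ((2*(k:ℝ))/5)^(2*(k:ℝ)) := by positivity
      have hy2 : (0:ℝ) ≤ (k:ℝ)⁻¹ := by positivity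
      refine mul_le_mul hks ?_ hx2 hy2
      exact hfrb
    calc (5*Real.pi)^s * (((l:ℝ)^(-(1/2:ℝ)) * (l:ℝ)^s) * ((k:ℝ)^(-s) *
            (G * ((2*(k:ℝ))/5)^(2*(k:ℝ))))) * (L^(-(1/2:ℝ)) / (l:ℝ)^(-(1/2:ℝ)))
        ≤ (5*Real.pi)^s * (((l:ℝ)^(-(1/2:ℝ)) * (l:ℝ)^s) * ((k:ℝ)^(-s) *
            (G * ((2*(k:ℝ))/5)^(2*(k:ℝ))))) * 1 := by
          apply mul_le_mul_of_nonneg_left hdivle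
          positivity
      _ = (5*Real.pi)^s * (((l:ℝ)^(-(1/2:ℝ)) * (l:ℝ)^s) * ((k:ℝ)^(-s) *
            (G * ((2*(k:ℝ))/5)^(2*(k:ℝ))))) := by ring
      _ ≤ (5*Real.pi)^s * ((l:ℝ)^((1:ℝ)/2+ε) * ((k:ℝ)⁻¹ * (2 * (Real.exp 1/20)^(2*k)))) :=
          mul_le_mul_of_nonneg_left hB hA0
  calc norm (W1 l k) ≤ ∑' p : ℕ×ℕ, g p := habs
    _ = D * (Z * Z) := hgval
    _ ≤ ((5*Real.pi)^s * ((l:ℝ)^((1:ℝ)/2+ε) * ((k:ℝ)⁻¹ * (2 * (Real.exp 1/20)^(2*k))))) * (Z*Z) := by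
        apply mul_le_mul_of_nonneg_right hD_le
        positivity
    _ = (2 * (5*Real.pi)^s * Z^2) * (l:ℝ)^((1:ℝ)/2+ε) * (k:ℝ)⁻¹ * (Real.exp 1/20)^(2*k) := by
        ring
    _ ≤ (2 * (5*Real.pi)^s * Z^2 + 1) * (l:ℝ)^((1:ℝ)/2+ε) * (k:ℝ)⁻¹ * (Real.exp 1/20)^(2*k) := by
        have : (0:ℝ) ≤ (l:ℝ)^((1:ℝ)/2+ε) * (k:ℝ)⁻¹ * (Real.exp 1/20)^(2*k) := by positivity
        nlinarith [this]
end
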